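/- Let n, k, l, r, t be integers with k, r ≥ 2, l ≥ t+1, l ≤ n < 2t, where t is the largest integer such that C(t-1,r-1) ≤ k. If H is a (k,l)-edge-maximal r-uniform hypergraph on n vertices, then |E(H)| ≥ C(l-1,r) + (n-l+1)·k. -/

import Mathlib

/-- The set of edges of `E` crossing the cut `(X, S \ X)` inside ground set `S`. -/
def cutEdges {V : Type*} [DecidableEq V] (E : Finset (Finset V)) (S X : Finset V) :
    Finset (Finset V) :=
  E.filter fun e => (e ∩ X).Nonempty ∧ (e ∩ (S \ X)).Nonempty

/-- `E` is the edge set of a `(k,l)`-edge-maximal `r`-uniform hypergraph on vertex set `W`: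
every subhypergraph on at least `l` vertices has edge-connectivity at most `k`, and
adding any missing `r`-subset of `W` creates a subhypergraph on at least `l` vertices
with edge-connectivity at least `k + 1`. -/
def IsKLEdgeMaximal {V : Type*} [DecidableEq V] (r k l : ℕ) (W : Finset V)
    (E : Finset (Finset V)) : Prop :=
  (∀ e ∈ E, e.card = r ∧ e ⊆ W) ∧
  (∀ S ⊆ W, ∀ E' ⊆ E, (∀ e ∈ E', e ⊆ S) → l ≤ S.card →
    ∃ X ⊆ S, X.Nonempty ∧ (S \ X).Nonempty ∧ (cutEdges E' S X).card ≤ k) ∧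
  (∀ e : Finset V, e ⊆ W → e.card = r → e ∉ E →
    ∃ S ⊆ W, ∃ E' ⊆ insert e E, (∀ f ∈ E', f ⊆ S) ∧ l ≤ S.card ∧
      ∀ X ⊆ S, X.Nonempty → (S \ X).Nonempty → k + 1 ≤ (cutEdges E' S X).card)

namespace KLEMaux


/-- Key binomial inequality: `C(a,r)+C(b,r)+C(a+b-1,r-1) ≤ C(a+b,r)` for `a,b ≥ 1`, `r ≥ 2`. -/
lemma choose_ineq_aux (s : ℕ) : ∀ a b : ℕ, 1 ≤ a → 1 ≤ b →
    a.choose (s+2) + b.choose (s+2) + (a+b-1).choose (s+1) ≤ (a+b).choose (s+2) := by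
  intro a
  induction a with
  | zero => intro b h; omega
  | succ n ih =>
    intro b _ hb
    by_cases hn : n = 0
    · subst hn
      have h0 : Nat.choose (0+1) (s+2) = 0 := Nat.choose_eq_zero_of_lt (by omega)
      have hps : (0+1+b).choose (s+2) = b.choose (s+1) + b.choose (s+2) := by
        have h : 0+1+b = b+1 := by omega
        rw [h]; exact Nat.choose_succ_succ b (s+1)
      have h3 : 0+1+b-1 = b := by omega
      rw [h0, hps, h3]
      omega
    · have hn1 : 1 ≤ n := by omega
      have ihb := ih b hn1 hb
      have hp1 : (n+1).choose (s+2) = n.choose (s+1) + n.choose (s+2) :=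
        Nat.choose_succ_succ n (s+1)
      have hp2 : (n+1+b).choose (s+2) = (n+b).choose (s+1) + (n+b).choose (s+2) := by
        have h : n+1+b = (n+b)+1 := by omega
        rw [h, Nat.choose_succ_succ (n+b) (s+1)]
      have hm : n.choose (s+1) ≤ (n+b-1).choose (s+1) := Nat.choose_le_choose _ (by omega)
      have he : n+1+b-1 = n+b := by omega
      rw [he, hp1, hp2]
      omega

lemma choose_ineq (r a b : ℕ) (hr : 2 ≤ r) (ha : 1 ≤ a) (hb : 1 ≤ b) :
    a.choose r + b.choose r + (a+b-1).choose (r-1) ≤ (a+b).choose r := by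
  obtain ⟨s, rfl⟩ : ∃ s, r = s+2 := ⟨r-2, by omega⟩
  have h : s+2-1 = s+1 := by omega
  rw [h]
  exact choose_ineq_aux s a b ha hb

variable {V : Type*} [DecidableEq V]

lemma sum_card_filter (X : Finset V) (B : Finset (Finset V)) :
    ∑ v ∈ X, (B.filter (fun e => v ∈ e)).card = ∑ e ∈ B, (X ∩ e).card := by
  have h2 : ∀ e : Finset V, (X ∩ e).card = ∑ v ∈ X, if v ∈ e then 1 else 0 := by
    intro e
    rw [← Finset.filter_mem_eq_inter, Finset.card_filter]
  simp_rw [Finset.card_filter, h2]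
  exact Finset.sum_comm

/-- The number of `r`-sets containing `v` inside `X` is at most `C(|X|-1, r-1)`. -/
lemma card_link_le (v : V) (X : Finset V) (r : ℕ) (A : Finset (Finset V))
    (hA : ∀ e ∈ A, v ∈ e ∧ e ⊆ X ∧ e.card = r) :
    A.card ≤ (X.card - 1).choose (r-1) := by
  rcases A.eq_empty_or_nonempty with h | ⟨e0, he0⟩
  · simp [h]
  have hvX : v ∈ X := (hA e0 he0).2.1 (hA e0 he0).1
  have hmaps : ∀ e ∈ A, e.erase v ∈ (X.erase v).powersetCard (r-1) := by
    intro e he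
    obtain ⟨hv, hsub, hcard⟩ := hA e he
    exact Finset.mem_powersetCard.mpr ⟨Finset.erase_subset_erase v hsub,
      by rw [Finset.card_erase_of_mem hv, hcard]⟩
  have hinj : Set.InjOn (fun e => Finset.erase e v) ↑A := by
    intro e1 h1 e2 h2 h
    have hv1 := (hA e1 h1).1
    have hv2 := (hA e2 h2).1
    rw [← Finset.insert_erase hv1, ← Finset.insert_erase hv2]
    simp only at h
    rw [h]
  calc A.card ≤ ((X.erase v).powersetCard (r-1)).card :=
        Finset.card_le_card_of_injOn _ hmaps hinj
    _ = (X.card - 1).choose (r-1) := by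
        rw [Finset.card_powersetCard, Finset.card_erase_of_mem hvX]

/-- If all `r`-subsets of `W` containing `v` are edges, the degree of `v` is at least
`C(|W|-1, r-1)`. -/
lemma star_card (v : V) (W : Finset V) (r : ℕ) (hv : v ∈ W) (hr : 1 ≤ r)
    (E : Finset (Finset V))
    (hall : ∀ f, f ⊆ W → f.card = r → v ∈ f → f ∈ E) :
    (W.card - 1).choose (r-1) ≤ (E.filter (fun e => v ∈ e)).card := by
  have hmaps : ∀ T ∈ (W.erase v).powersetCard (r-1),
      insert v T ∈ E.filter (fun e => v ∈ e) := by
    intro T hT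
    obtain ⟨hTsub, hTcard⟩ := Finset.mem_powersetCard.mp hT
    have hvT : v ∉ T := fun h => (Finset.mem_erase.mp (hTsub h)).1 rfl
    have hsub : insert v T ⊆ W :=
      Finset.insert_subset hv (hTsub.trans (Finset.erase_subset _ _))
    have hcard : (insert v T).card = r := by
      rw [Finset.card_insert_of_notMem hvT, hTcard]; omega
    exact Finset.mem_filter.mpr ⟨hall _ hsub hcard (Finset.mem_insert_self _ _),
      Finset.mem_insert_self _ _⟩
  have hinj : Set.InjOn (fun T => insert v T) (((W.erase v).powersetCard (r-1) : Finset (Finset V)) : Set (Finset V)) := by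
    intro T1 h1 T2 h2 h
    have hv1 : v ∉ T1 := fun hh =>
      (Finset.mem_erase.mp ((Finset.mem_powersetCard.mp h1).1 hh)).1 rfl
    have hv2 : v ∉ T2 := fun hh =>
      (Finset.mem_erase.mp ((Finset.mem_powersetCard.mp h2).1 hh)).1 rfl
    simp only at h
    rw [← Finset.erase_insert hv1, ← Finset.erase_insert hv2, h]
  calc (W.card - 1).choose (r-1)
      = ((W.erase v).powersetCard (r-1)).card := by
        rw [Finset.card_powersetCard, Finset.card_erase_of_mem hv]
    _ ≤ (E.filter (fun e => v ∈ e)).card := Finset.card_le_card_of_injOn _ hmaps hinj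

lemma sdiff_singleton_nonempty (S : Finset V) (v : V) (h : 2 ≤ S.card) :
    (S \ {v}).Nonempty := by
  have h1 : 1 < S.card := by omega
  obtain ⟨u, hu, hne⟩ := Finset.exists_mem_ne h1 v
  exact ⟨u, Finset.mem_sdiff.mpr ⟨hu, by simp [hne]⟩⟩


variable {V : Type*} [DecidableEq V]

lemma main (k l r t : ℕ) (hk : 2 ≤ k) (hr : 2 ≤ r)
    (ht1 : (t - 1).choose (r - 1) ≤ k) (ht2 : k < t.choose (r - 1))
    (hl : t + 1 ≤ l) :
    ∀ w : ℕ, ∀ (W : Finset V) (E : Finset (Finset V)), W.card = w → l ≤ w → w < 2 * t →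
      IsKLEdgeMaximal r k l W E → (l - 1).choose r + (w - l + 1) * k ≤ E.card := by
  intro w
  induction w using Nat.strong_induction_on with
  | _ w IH =>
  intro W E hW hlw hw2t hmax
  obtain ⟨h1, h2, h3⟩ := hmax
  -- t ≥ r
  have htr : r ≤ t := by
    by_contra h
    push_neg at h
    have : t.choose (r-1) ≤ 1 := by
      rcases Nat.lt_or_ge t (r-1) with h' | h'
      · rw [Nat.choose_eq_zero_of_lt h']; omega
      · have ht' : t = r - 1 := by omega
        rw [ht', Nat.choose_self]
    omega
  have hl3 : 3 ≤ l := by omega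
  have hwr : r + 1 ≤ w := by omega
  -- Any missing edge yields S, E' with f ∈ E'
  have hmem3 : ∀ f : Finset V, f ⊆ W → f.card = r → f ∉ E →
      ∃ S, S ⊆ W ∧ ∃ E', E' ⊆ insert f E ∧ (∀ e ∈ E', e ⊆ S) ∧ l ≤ S.card ∧
        (∀ Y ⊆ S, Y.Nonempty → (S \ Y).Nonempty → k + 1 ≤ (cutEdges E' S Y).card) ∧
        f ∈ E' := by
    intro f hfW hfr hfE
    obtain ⟨S, hSW, E', hE', hE'S, hlS, hcut⟩ := h3 f hfW hfr hfE
    refine ⟨S, hSW, E', hE', hE'S, hlS, hcut, ?_⟩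
    by_contra hfE'
    have hE'E : E' ⊆ E := by
      intro e he
      rcases Finset.mem_insert.mp (hE' he) with rfl | h
      · exact absurd he hfE'
      · exact h
    obtain ⟨X, hXS, hXne, hXc, hXk⟩ := h2 S hSW E' hE'E hE'S hlS
    have := hcut X hXS hXne hXc
    omega
  -- minimum degree ≥ k
  have hdeg : ∀ v ∈ W, k ≤ (E.filter (fun e => v ∈ e)).card := by
    intro v hvW
    by_cases hall : ∀ f, f ⊆ W → f.card = r → v ∈ f → f ∈ E
    · have hs := star_card v W r hvW (by omega) E hall
      have hm : t.choose (r-1) ≤ (W.card - 1).choose (r-1) :=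
        Nat.choose_le_choose _ (by omega)
      omega
    · push_neg at hall
      obtain ⟨f, hfW, hfr, hvf, hfE⟩ := hall
      obtain ⟨S, hSW, E', hE'sub, hE'S, hlS, hcut, hfE'⟩ := hmem3 f hfW hfr hfE
      have hvS : v ∈ S := hE'S f hfE' hvf
      have h6 := hcut {v} (Finset.singleton_subset_iff.mpr hvS) ⟨v, Finset.mem_singleton_self v⟩
        (sdiff_singleton_nonempty S v (by omega))
      have hsub : cutEdges E' S {v} ⊆ insert f (E.filter (fun e => v ∈ e)) := by
        intro e he
        obtain ⟨heE', hne1, _⟩ := Finset.mem_filter.mp he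
        have hve : v ∈ e := by
          obtain ⟨u, hu⟩ := hne1
          obtain ⟨hu1, hu2⟩ := Finset.mem_inter.mp hu
          rwa [Finset.mem_singleton.mp hu2] at hu1
        rcases Finset.mem_insert.mp (hE'sub heE') with rfl | h
        · exact Finset.mem_insert_self _ _
        · exact Finset.mem_insert_of_mem (Finset.mem_filter.mpr ⟨h, hve⟩)
      have := Finset.card_le_card hsub
      have := Finset.card_insert_le f (E.filter (fun e => v ∈ e))
      omega
  -- choose the cut, smaller side
  obtain ⟨X₀, hX₀W, hX₀ne, hX₀cne, hX₀k⟩ :=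
    h2 W Finset.Subset.rfl E Finset.Subset.rfl (fun e he => (h1 e he).2) (by omega)
  obtain ⟨X, hXW, hXne, hXcne, hcutk, hhalf⟩ :
      ∃ X, X ⊆ W ∧ X.Nonempty ∧ (W \ X).Nonempty ∧ (cutEdges E W X).card ≤ k ∧
        2 * X.card ≤ w := by
    have hsum := Finset.card_sdiff_add_card_eq_card hX₀W
    rcases le_total X₀.card ((W \ X₀).card) with h | h
    · exact ⟨X₀, hX₀W, hX₀ne, hX₀cne, hX₀k, by omega⟩
    · refine ⟨W \ X₀, Finset.sdiff_subset, hX₀cne, ?_, ?_, ?_⟩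
      · rw [Finset.sdiff_sdiff_eq_self hX₀W]; exact hX₀ne
      · have heq : cutEdges E W (W \ X₀) = cutEdges E W X₀ := by
          apply Finset.filter_congr
          intro e _
          rw [Finset.sdiff_sdiff_eq_self hX₀W, and_comm]
        rw [heq]; exact hX₀k
      · have : (W \ X₀).card + X₀.card = w := by rw [hsum, hW]
        omega
  have hxw : X.card + (W \ X).card = w := by
    have := Finset.card_sdiff_add_card_eq_card hXW
    omega
  have hx1 : 1 ≤ X.card := Finset.card_pos.mpr hXne
  have hxc1 : 1 ≤ (W \ X).card := Finset.card_pos.mpr hXcne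
  have hxt : X.card < t := by omega
  -- every vertex of X is in a crossing edge
  have hXinK : ∀ v ∈ X, ∃ e ∈ cutEdges E W X, v ∈ e := by
    intro v hv
    by_contra h
    push_neg at h
    have hsub : ∀ e ∈ E.filter (fun e => v ∈ e), v ∈ e ∧ e ⊆ X ∧ e.card = r := by
      intro e he
      obtain ⟨heE, hve⟩ := Finset.mem_filter.mp he
      refine ⟨hve, ?_, (h1 e heE).1⟩
      intro u hu
      by_contra huX
      have hcross : e ∈ cutEdges E W X := by
        refine Finset.mem_filter.mpr ⟨heE, ⟨v, Finset.mem_inter.mpr ⟨hve, hv⟩⟩,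
          ⟨u, Finset.mem_inter.mpr ⟨hu, Finset.mem_sdiff.mpr ⟨(h1 e heE).2 hu, huX⟩⟩⟩⟩
      exact h e hcross hve
    have hle := card_link_le v X r _ hsub
    have hd := hdeg v (hXW hv)
    -- C(x-1,r-1) ≤ C(t-2,r-1) < C(t-1,r-1) ≤ k
    have hm1 : (X.card - 1).choose (r-1) ≤ (t-2).choose (r-1) :=
      Nat.choose_le_choose _ (by omega)
    have hps : (t-1).choose (r-1) = (t-2).choose (r-2) + (t-2).choose (r-1) := by
      have e1 : t-1 = (t-2)+1 := by omega
      have e2 : r-1 = (r-2)+1 := by omega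
      rw [e1, e2]
      exact Nat.choose_succ_succ (t-2) (r-2)
    have hpos : 0 < (t-2).choose (r-2) := Nat.choose_pos (by omega)
    omega
  
  -- key structural lemma for missing crossing edges
  have hkey : ∀ f : Finset V, f ⊆ W → f.card = r → f ∉ E →
      (f ∩ X).Nonempty → (f ∩ (W \ X)).Nonempty →
      (cutEdges E W X).card = k ∧ (∀ e ∈ insert f (cutEdges E W X), X ⊆ e) := by
    intro f hfW hfr hfE hfX hfXc
    obtain ⟨S, hSW, E', hE'sub, hE'S, hlS, hcut, hfE'⟩ := hmem3 f hfW hfr hfE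
    have hfS : f ⊆ S := hE'S f hfE'
    have hcardE' : ∀ e ∈ E', e.card = r := by
      intro e he
      rcases Finset.mem_insert.mp (hE'sub he) with rfl | h
      · exact hfr
      · exact (h1 e h).1
    have hXSne : (X ∩ S).Nonempty := by
      obtain ⟨u, hu⟩ := hfX
      obtain ⟨hu1, hu2⟩ := Finset.mem_inter.mp hu
      exact ⟨u, Finset.mem_inter.mpr ⟨hu2, hfS hu1⟩⟩
    have hScne : (S \ (X ∩ S)).Nonempty := by
      obtain ⟨u, hu⟩ := hfXc
      obtain ⟨hu1, hu2⟩ := Finset.mem_inter.mp hu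
      have huX : u ∉ X := (Finset.mem_sdiff.mp hu2).2
      exact ⟨u, Finset.mem_sdiff.mpr ⟨hfS hu1, fun hh => huX (Finset.mem_inter.mp hh).1⟩⟩
    have h5 := hcut (X ∩ S) Finset.inter_subset_right hXSne hScne
    have hsubK : cutEdges E' S (X ∩ S) ⊆ insert f (cutEdges E W X) := by
      intro e he
      obtain ⟨heE', hne1, hne2⟩ := Finset.mem_filter.mp he
      rcases Finset.mem_insert.mp (hE'sub heE') with rfl | heE
      · exact Finset.mem_insert_self _ _
      · refine Finset.mem_insert_of_mem (Finset.mem_filter.mpr ⟨heE, ?_, ?_⟩)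
        · obtain ⟨u, hu⟩ := hne1
          obtain ⟨hu1, hu2⟩ := Finset.mem_inter.mp hu
          exact ⟨u, Finset.mem_inter.mpr ⟨hu1, (Finset.mem_inter.mp hu2).1⟩⟩
        · obtain ⟨u, hu⟩ := hne2
          obtain ⟨hu1, hu2⟩ := Finset.mem_inter.mp hu
          obtain ⟨huS, huXS⟩ := Finset.mem_sdiff.mp hu2
          have huX : u ∉ X := fun hh => huXS (Finset.mem_inter.mpr ⟨hh, huS⟩)
          exact ⟨u, Finset.mem_inter.mpr ⟨hu1, Finset.mem_sdiff.mpr ⟨hSW huS, huX⟩⟩⟩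
    have hfK : f ∉ cutEdges E W X := fun h => hfE (Finset.mem_filter.mp h).1
    have hcardIns : (insert f (cutEdges E W X)).card = (cutEdges E W X).card + 1 :=
      Finset.card_insert_of_notMem hfK
    have hcard5 := Finset.card_le_card hsubK
    have hKk : (cutEdges E W X).card = k := by omega
    have hEq : cutEdges E' S (X ∩ S) = insert f (cutEdges E W X) :=
      Finset.eq_of_subset_of_card_le hsubK (by omega)
    have hKE' : insert f (cutEdges E W X) ⊆ E' := by
      rw [← hEq]; exact Finset.filter_subset _ _
    have hXS : X ⊆ S := by
      intro v hv
      obtain ⟨e, heK, hve⟩ := hXinK v hv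
      exact hE'S e (hKE' (Finset.mem_insert_of_mem heK)) hve
    have hdeg' : ∀ v ∈ X, k + 1 ≤ (X.card - 1).choose (r-1) +
        ((insert f (cutEdges E W X)).filter (fun e => v ∈ e)).card := by
      intro v hv
      have h6 := hcut {v} (Finset.singleton_subset_iff.mpr (hXS hv))
        ⟨v, Finset.mem_singleton_self v⟩ (sdiff_singleton_nonempty S v (by omega))
      have hsplit : cutEdges E' S {v} ⊆
          (E'.filter (fun e => v ∈ e ∧ e ⊆ X)) ∪
          ((insert f (cutEdges E W X)).filter (fun e => v ∈ e)) := by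
        intro e he
        obtain ⟨heE', hne1, -⟩ := Finset.mem_filter.mp he
        have hve : v ∈ e := by
          obtain ⟨u, hu⟩ := hne1
          obtain ⟨hu1, hu2⟩ := Finset.mem_inter.mp hu
          rwa [Finset.mem_singleton.mp hu2] at hu1
        by_cases heX : e ⊆ X
        · exact Finset.mem_union_left _ (Finset.mem_filter.mpr ⟨heE', hve, heX⟩)
        · refine Finset.mem_union_right _ (Finset.mem_filter.mpr ⟨?_, hve⟩)
          rw [← hEq]
          refine Finset.mem_filter.mpr ⟨heE',
            ⟨v, Finset.mem_inter.mpr ⟨hve, Finset.mem_inter.mpr ⟨hv, hXS hv⟩⟩⟩, ?_⟩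
          obtain ⟨u, hue, huX⟩ := Finset.not_subset.mp heX
          have huS : u ∈ S := hE'S e heE' hue
          exact ⟨u, Finset.mem_inter.mpr ⟨hue,
            Finset.mem_sdiff.mpr ⟨huS, fun hh => huX (Finset.mem_inter.mp hh).1⟩⟩⟩
      have hA : (E'.filter (fun e => v ∈ e ∧ e ⊆ X)).card ≤ (X.card - 1).choose (r-1) := by
        apply card_link_le v X r
        intro e he
        obtain ⟨heE', hve, heX⟩ := Finset.mem_filter.mp he
        exact ⟨hve, heX, hcardE' e heE'⟩
      have hc1 := Finset.card_le_card hsplit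
      have hc2 := Finset.card_union_le (E'.filter (fun e => v ∈ e ∧ e ⊆ X))
        ((insert f (cutEdges E W X)).filter (fun e => v ∈ e))
      omega
    have hsum1 : ∑ v ∈ X, ((insert f (cutEdges E W X)).filter (fun e => v ∈ e)).card
        = ∑ e ∈ insert f (cutEdges E W X), (X ∩ e).card :=
      sum_card_filter X _
    have hbound : ∀ e ∈ insert f (cutEdges E W X), (X ∩ e).card ≤ r - 1 := by
      intro e he
      obtain ⟨u, hue, huX, hecard⟩ : ∃ u, u ∈ e ∧ u ∉ X ∧ e.card = r := by
        rcases Finset.mem_insert.mp he with rfl | heK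
        · obtain ⟨u, hu⟩ := hfXc
          obtain ⟨hu1, hu2⟩ := Finset.mem_inter.mp hu
          exact ⟨u, hu1, (Finset.mem_sdiff.mp hu2).2, hfr⟩
        · obtain ⟨heE, -, hne2⟩ := Finset.mem_filter.mp heK
          obtain ⟨u, hu⟩ := hne2
          obtain ⟨hu1, hu2⟩ := Finset.mem_inter.mp hu
          exact ⟨u, hu1, (Finset.mem_sdiff.mp hu2).2, (h1 e heE).1⟩
      have hsub2 : X ∩ e ⊆ e.erase u := by
        intro z hz
        obtain ⟨hz1, hz2⟩ := Finset.mem_inter.mp hz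
        exact Finset.mem_erase.mpr ⟨fun hh => huX (hh ▸ hz1), hz2⟩
      calc (X ∩ e).card ≤ (e.erase u).card := Finset.card_le_card hsub2
        _ = r - 1 := by rw [Finset.card_erase_of_mem hue, hecard]
    have hsum2 : ∑ e ∈ insert f (cutEdges E W X), (X ∩ e).card ≤ (k+1) * (r-1) := by
      have h9 := Finset.sum_le_card_nsmul (insert f (cutEdges E W X))
        (fun e => (X ∩ e).card) (r-1) hbound
      rwa [hcardIns, hKk, smul_eq_mul] at h9
    have hsum0 : X.card * (k+1) ≤ X.card * ((X.card - 1).choose (r-1)) + (k+1) * (r-1) := by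
      have hs1 : ∑ _v ∈ X, (k+1) ≤ ∑ v ∈ X, ((X.card - 1).choose (r-1) +
          ((insert f (cutEdges E W X)).filter (fun e => v ∈ e)).card) :=
        Finset.sum_le_sum hdeg'
      rw [Finset.sum_const, Finset.sum_add_distrib, Finset.sum_const, smul_eq_mul, smul_eq_mul,
        hsum1] at hs1
      linarith [hs1, hsum2]
    have hxr : X.card ≤ r - 1 := by
      by_contra hxge
      push_neg at hxge
      obtain ⟨a, ha⟩ : ∃ a, X.card = a + 1 := ⟨X.card - 1, by omega⟩
      obtain ⟨b, hb⟩ : ∃ b, r = b + 1 := ⟨r - 1, by omega⟩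
      have e1 : X.card * ((X.card - 1).choose (r-1)) = X.card.choose r * r := by
        rw [ha, hb]
        simpa [Nat.succ_eq_add_one] using Nat.add_one_mul_choose_eq a b
      have e2 : X.card.choose r * r = X.card.choose (r-1) * (X.card - (r-1)) := by
        rw [hb]
        simpa using Nat.choose_succ_right_eq X.card b
      have e3 : X.card.choose (r-1) ≤ k :=
        le_trans (Nat.choose_le_choose _ (by omega : X.card ≤ t - 1)) ht1
      set d := X.card - (r-1) with hd
      have hd1 : 1 ≤ d := by omega
      have hxd : X.card = d + (r-1) := by omega
      have hfinal : (d + (r-1)) * (k+1) ≤ k * d + (k+1) * (r-1) := by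
        calc (d + (r-1)) * (k+1) = X.card * (k+1) := by rw [← hxd]
          _ ≤ X.card * ((X.card - 1).choose (r-1)) + (k+1) * (r-1) := hsum0
          _ = X.card.choose (r-1) * d + (k+1) * (r-1) := by rw [e1, e2]
          _ ≤ k * d + (k+1) * (r-1) := by
              have h9 := Nat.mul_le_mul_right d e3
              omega
      have e4 : d * (k+1) = d * k + d := by ring
      have e5 : k * d = d * k := Nat.mul_comm _ _
      have e6 : (d + (r-1)) * (k+1) = d * (k+1) + (r-1) * (k+1) := by ring
      have e7 : (k+1) * (r-1) = (r-1) * (k+1) := Nat.mul_comm _ _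
      linarith [hfinal, e4, e5, e6, e7, hd1]
    have hCzero : (X.card - 1).choose (r-1) = 0 := Nat.choose_eq_zero_of_lt (by omega)
    refine ⟨hKk, ?_⟩
    intro e he v hv
    have h8 := hdeg' v hv
    rw [hCzero] at h8
    have h9 : ((insert f (cutEdges E W X)).filter (fun e => v ∈ e)).card ≤
        (insert f (cutEdges E W X)).card := Finset.card_le_card (Finset.filter_subset _ _)
    have hfull : (insert f (cutEdges E W X)).filter (fun e => v ∈ e)
        = insert f (cutEdges E W X) := by
      apply Finset.eq_of_subset_of_card_le (Finset.filter_subset _ _)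
      omega
    have h10 : e ∈ (insert f (cutEdges E W X)).filter (fun e => v ∈ e) := by
      rw [hfull]; exact he
    exact (Finset.mem_filter.mp h10).2
  -- a missing crossing edge exists
  have hmissing : ∃ f : Finset V, f ⊆ W ∧ f.card = r ∧ f ∉ E ∧
      (f ∩ X).Nonempty ∧ (f ∩ (W \ X)).Nonempty := by
    by_contra hcon
    push_neg at hcon
    set P := (W.powersetCard r).filter
      (fun e => (e ∩ X).Nonempty ∧ (e ∩ (W \ X)).Nonempty) with hP
    have hPK : P ⊆ cutEdges E W X := by
      intro e he
      obtain ⟨hep, hne1, hne2⟩ := Finset.mem_filter.mp he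
      obtain ⟨heW, her⟩ := Finset.mem_powersetCard.mp hep
      by_cases heE : e ∈ E
      · exact Finset.mem_filter.mpr ⟨heE, hne1, hne2⟩
      · exact absurd hne2 (Finset.not_nonempty_iff_eq_empty.mpr (hcon e heW her heE hne1))
    have hsplitP : P.card + ((W.powersetCard r).filter
        (fun e => ¬((e ∩ X).Nonempty ∧ (e ∩ (W \ X)).Nonempty))).card
        = (W.powersetCard r).card := Finset.card_filter_add_card_filter_not
      (s := W.powersetCard r) (p := fun e => (e ∩ X).Nonempty ∧ (e ∩ (W \ X)).Nonempty)
    have hnegsub : (W.powersetCard r).filter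
        (fun e => ¬((e ∩ X).Nonempty ∧ (e ∩ (W \ X)).Nonempty)) ⊆
        X.powersetCard r ∪ (W \ X).powersetCard r := by
      intro e he
      obtain ⟨hep, hneg⟩ := Finset.mem_filter.mp he
      obtain ⟨heW, her⟩ := Finset.mem_powersetCard.mp hep
      rw [not_and_or] at hneg
      rcases hneg with hx | hx
      · refine Finset.mem_union_right _ (Finset.mem_powersetCard.mpr ⟨?_, her⟩)
        intro u hu
        refine Finset.mem_sdiff.mpr ⟨heW hu, fun huX =>
          hx ⟨u, Finset.mem_inter.mpr ⟨hu, huX⟩⟩⟩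
      · refine Finset.mem_union_left _ (Finset.mem_powersetCard.mpr ⟨?_, her⟩)
        intro u hu
        by_contra huX
        exact hx ⟨u, Finset.mem_inter.mpr ⟨hu, Finset.mem_sdiff.mpr ⟨heW hu, huX⟩⟩⟩
    have hcard1 : (W.powersetCard r).card = w.choose r := by
      rw [Finset.card_powersetCard, hW]
    have hcard2 : (X.powersetCard r).card = X.card.choose r := Finset.card_powersetCard _ _
    have hcard3 : ((W \ X).powersetCard r).card = (w - X.card).choose r := by
      rw [Finset.card_powersetCard]
      congr 1
      omega
    have hcu := Finset.card_union_le (X.powersetCard r) ((W \ X).powersetCard r)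
    have hnegcard := Finset.card_le_card hnegsub
    have hPcard := Finset.card_le_card hPK
    have hineq := choose_ineq r X.card (w - X.card) hr hx1 (by omega)
    have hxx : X.card + (w - X.card) = w := by omega
    rw [hxx] at hineq
    have hmono : t.choose (r-1) ≤ (w-1).choose (r-1) := Nat.choose_le_choose _ (by omega)
    omega
  obtain ⟨f₁, hf₁W, hf₁r, hf₁E, hf₁X, hf₁Xc⟩ := hmissing
  obtain ⟨hKk, hXall⟩ := hkey f₁ hf₁W hf₁r hf₁E hf₁X hf₁Xc
  -- X is a single vertex
  have hxone : X.card = 1 := by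
    by_contra hx2
    obtain ⟨u, hu, u', hu', huu'⟩ := Finset.one_lt_card.mp (show 1 < X.card by omega)
    obtain ⟨xb, hxb⟩ := hXcne
    have hxbW : xb ∈ W := (Finset.mem_sdiff.mp hxb).1
    have hxbX : xb ∉ X := (Finset.mem_sdiff.mp hxb).2
    have huW : u ∈ W := hXW hu
    have hcard3 : r - 2 ≤ (W \ ({u, u', xb} : Finset V)).card := by
      have h3' : (({u, u', xb} : Finset V)).card ≤ 3 := by
        apply le_trans (Finset.card_insert_le _ _)
        have h9 := Finset.card_insert_le u' ({xb} : Finset V)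
        simp only [Finset.card_singleton] at h9
        omega
      have hsd := Finset.card_le_card_sdiff_add_card (s := W) (t := ({u, u', xb} : Finset V))
      omega
    obtain ⟨T, hT, hTcard⟩ := Finset.exists_subset_card_eq hcard3
    have hTW : T ⊆ W := hT.trans Finset.sdiff_subset
    have hTnot : ∀ z ∈ T, z ≠ u ∧ z ≠ u' ∧ z ≠ xb := by
      intro z hz
      have h9 := (Finset.mem_sdiff.mp (hT hz)).2
      simp only [Finset.mem_insert, Finset.mem_singleton, not_or] at h9
      exact h9
    set g := insert u (insert xb T) with hg
    have hxbT : xb ∉ T := fun h => (hTnot _ h).2.2 rfl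
    have huxb : u ≠ xb := fun h => hxbX (h ▸ hu)
    have huIT : u ∉ insert xb T := by
      intro hmem
      rcases Finset.mem_insert.mp hmem with h | h
      · exact huxb h
      · exact (hTnot _ h).1 rfl
    have hgcard : g.card = r := by
      rw [hg, Finset.card_insert_of_notMem huIT, Finset.card_insert_of_notMem hxbT, hTcard]
      omega
    have hgW : g ⊆ W := by
      rw [hg]
      exact Finset.insert_subset huW (Finset.insert_subset hxbW hTW)
    have hug : u ∈ g := by rw [hg]; exact Finset.mem_insert_self _ _
    have hxbg : xb ∈ g := by
      rw [hg]; exact Finset.mem_insert_of_mem (Finset.mem_insert_self _ _)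
    have hgX : (g ∩ X).Nonempty := ⟨u, Finset.mem_inter.mpr ⟨hug, hu⟩⟩
    have hgXc : (g ∩ (W \ X)).Nonempty := ⟨xb, Finset.mem_inter.mpr ⟨hxbg, hxb⟩⟩
    have hu'g : u' ∉ g := by
      rw [hg]
      intro hmem
      rcases Finset.mem_insert.mp hmem with h | hmem2
      · exact huu' h.symm
      rcases Finset.mem_insert.mp hmem2 with h | h
      · exact hxbX (h ▸ hu')
      · exact (hTnot _ h).2.1 rfl
    have hXg : X ⊆ g := by
      by_cases hgE : g ∈ E
      · have hgK : g ∈ cutEdges E W X := Finset.mem_filter.mpr ⟨hgE, hgX, hgXc⟩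
        exact hXall g (Finset.mem_insert_of_mem hgK)
      · exact (hkey g hgW hgcard hgE hgX hgXc).2 g (Finset.mem_insert_self _ _)
    exact hu'g (hXg hu')
  obtain ⟨v, hXv⟩ := Finset.card_eq_one.mp hxone
  subst hXv
  have hvW : v ∈ W := hXW (Finset.mem_singleton_self v)
  have hKdeg : cutEdges E W {v} = E.filter (fun e => v ∈ e) := by
    apply Finset.filter_congr
    intro e he
    have hew := (h1 e he).2
    have her := (h1 e he).1
    constructor
    · rintro ⟨hne1, -⟩
      obtain ⟨u, hu⟩ := hne1
      obtain ⟨hu1, hu2⟩ := Finset.mem_inter.mp hu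
      rwa [Finset.mem_singleton.mp hu2] at hu1
    · intro hve
      refine ⟨⟨v, Finset.mem_inter.mpr ⟨hve, Finset.mem_singleton_self v⟩⟩, ?_⟩
      obtain ⟨u, hue, hune⟩ := Finset.exists_mem_ne
        (show 1 < e.card by omega) v
      exact ⟨u, Finset.mem_inter.mpr ⟨hue,
        Finset.mem_sdiff.mpr ⟨hew hue, by simp [hune]⟩⟩⟩
  have hdegk : (E.filter (fun e => v ∈ e)).card = k := by rw [← hKdeg]; exact hKk
  have hE2card : E.card = (E.filter (fun e => ¬ v ∈ e)).card + k := by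
    have h9 := Finset.card_filter_add_card_filter_not
      (s := E) (p := fun e => v ∈ e)
    omega
  have havoid : ∀ f : Finset V, f ⊆ W → f.card = r → f ∉ E → v ∉ f →
      ∃ S, S ⊆ W.erase v ∧ ∃ E', E' ⊆ insert f (E.filter (fun e => ¬ v ∈ e)) ∧
        (∀ e ∈ E', e ⊆ S) ∧ l ≤ S.card ∧
        (∀ Y ⊆ S, Y.Nonempty → (S \ Y).Nonempty → k + 1 ≤ (cutEdges E' S Y).card) := by
    intro f hfW hfr hfE hvf
    obtain ⟨S, hSW, E', hE'sub, hE'S, hlS, hcut, hfE'⟩ := hmem3 f hfW hfr hfE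
    have hvS : v ∉ S := by
      intro hvs
      have h6 := hcut {v} (Finset.singleton_subset_iff.mpr hvs)
        ⟨v, Finset.mem_singleton_self v⟩ (sdiff_singleton_nonempty S v (by omega))
      have hsub : cutEdges E' S {v} ⊆ E.filter (fun e => v ∈ e) := by
        intro e he
        obtain ⟨heE', hne1, -⟩ := Finset.mem_filter.mp he
        have hve : v ∈ e := by
          obtain ⟨z, hz⟩ := hne1
          obtain ⟨hz1, hz2⟩ := Finset.mem_inter.mp hz
          rwa [Finset.mem_singleton.mp hz2] at hz1
        rcases Finset.mem_insert.mp (hE'sub heE') with rfl | hh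
        · exact absurd hve hvf
        · exact Finset.mem_filter.mpr ⟨hh, hve⟩
      have h9 := Finset.card_le_card hsub
      omega
    refine ⟨S, Finset.subset_erase.mpr ⟨hSW, hvS⟩, E', ?_, hE'S, hlS, hcut⟩
    intro e he
    rcases Finset.mem_insert.mp (hE'sub he) with rfl | hh
    · exact Finset.mem_insert_self _ _
    · exact Finset.mem_insert_of_mem
        (Finset.mem_filter.mpr ⟨hh, fun hv' => hvS (hE'S e he hv')⟩)
  by_cases hwl : w = l
  · subst hwl
    have hcomp : ∀ f : Finset V, f ⊆ W.erase v → f.card = r → f ∈ E := by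
      intro f hf hfr'
      by_contra hfE
      have hfW : f ⊆ W := hf.trans (Finset.erase_subset _ _)
      have hvf : v ∉ f := fun h => (Finset.mem_erase.mp (hf h)).1 rfl
      obtain ⟨S, hS, E', -, -, hlS, -⟩ := havoid f hfW hfr' hfE hvf
      have h7 := Finset.card_le_card hS
      rw [Finset.card_erase_of_mem hvW, hW] at h7
      omega
    have hsub : (W.erase v).powersetCard r ⊆ E.filter (fun e => ¬ v ∈ e) := by
      intro e he
      obtain ⟨heW, her⟩ := Finset.mem_powersetCard.mp he
      exact Finset.mem_filter.mpr ⟨hcomp e heW her,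
        fun hv' => (Finset.mem_erase.mp (heW hv')).1 rfl⟩
    have hc := Finset.card_le_card hsub
    rw [Finset.card_powersetCard, Finset.card_erase_of_mem hvW, hW] at hc
    have hone : w - w + 1 = 1 := by omega
    rw [hone, one_mul]
    omega
  · have hwl' : l + 1 ≤ w := by omega
    have hmax2 : IsKLEdgeMaximal r k l (W.erase v) (E.filter (fun e => ¬ v ∈ e)) := by
      refine ⟨?_, ?_, ?_⟩
      · intro e he
        obtain ⟨heE, hve⟩ := Finset.mem_filter.mp he
        exact ⟨(h1 e heE).1, Finset.subset_erase.mpr ⟨(h1 e heE).2, hve⟩⟩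
      · intro S hS E' hE' hE'S hlS
        exact h2 S (hS.trans (Finset.erase_subset _ _)) E'
          (hE'.trans (Finset.filter_subset _ _)) hE'S hlS
      · intro f hf hfr' hfE2
        have hvf : v ∉ f := fun h => (Finset.mem_erase.mp (hf h)).1 rfl
        have hfE : f ∉ E := fun h => hfE2 (Finset.mem_filter.mpr ⟨h, hvf⟩)
        obtain ⟨S, hS, E', hE', hE'S, hlS, hcut⟩ :=
          havoid f (hf.trans (Finset.erase_subset _ _)) hfr' hfE hvf
        exact ⟨S, hS, E', hE', hE'S, hlS, hcut⟩
    have hIH := IH (w-1) (by omega) (W.erase v) (E.filter (fun e => ¬ v ∈ e))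
      (by rw [Finset.card_erase_of_mem hvW, hW]) (by omega) (by omega) hmax2
    have harith : (w - l + 1) * k = (w - 1 - l + 1) * k + k := by
      have h9 : w - l + 1 = (w - 1 - l + 1) + 1 := by omega
      rw [h9, Nat.add_mul, one_mul]
    rw [hE2card, harith, ← Nat.add_assoc]
    exact Nat.add_le_add_right hIH k

end KLEMaux

theorem stmt_12 (n k l r t : ℕ) (hk : 2 ≤ k) (hr : 2 ≤ r)
    (ht1 : (t - 1).choose (r - 1) ≤ k) (ht2 : k < t.choose (r - 1))
    (hl : t + 1 ≤ l) (hln : l ≤ n) (hn2t : n < 2 * t)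
    (E : Finset (Finset (Fin n)))
    (hmax : IsKLEdgeMaximal r k l Finset.univ E) :
    (l - 1).choose r + (n - l + 1) * k ≤ E.card := by
  exact KLEMaux.main k l r t hk hr ht1 ht2 hl n Finset.univ E (by simp) hln hn2t hmax
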